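/- For every t ≥ 0, every phase S ∈ {1,…,N}, and every W ∈ {0,…,M}, the function Q ↦ V_t(S,Q,W) is nondecreasing on {0,…,B}. -/

import Mathlib

open Finset Filter Topology

/-- Parameters of the multi-server sleeping MDP with MMPP arrivals. -/
structure MDPParams where
  /-- number of MMPP phases -/
  N : ℕ
  /-- number of servers -/
  M : ℕ
  /-- buffer size -/
  B : ℕ
  /-- arrival rates per phase -/
  lam : ℕ → ℝ
  /-- phase transition rates -/
  sig : ℕ → ℕ → ℝ
  /-- service rate -/
  mu : ℝ
  /-- slot length -/
  Δ : ℝ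
  /-- discount factor -/
  r : ℝ
  /-- delay weight -/
  ω : ℝ
  /-- per-slot active energy -/
  Eon : ℝ
  /-- switching energy -/
  Esw : ℝ

/-- Switching cost `s(W,a) = max(a−W,0)·E_sw`. -/
noncomputable def sCost (p : MDPParams) (W a : ℕ) : ℝ := ((a - W : ℕ) : ℝ) * p.Esw

/-- One-step cost-plus-continuation `w` built from a value function `V`. -/
noncomputable def wStep (p : MDPParams) (V : ℕ → ℕ → ℕ → ℝ) (S Q a : ℕ) : ℝ :=
  p.ω * Q + a * p.Eon + p.r *
    ((∑ S' ∈ (Finset.Icc 1 p.N).erase S, p.sig S S' * p.Δ * V S' Q a)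
      + p.lam S * p.Δ * (if Q < p.B then (1 : ℝ) else 0) * V S (Q + 1) a
      + (a : ℝ) * p.mu * p.Δ * (if 0 < Q then (1 : ℝ) else 0) * V S (Q - 1) a
      + (1 - (a : ℝ) * p.mu * p.Δ * (if 0 < Q then (1 : ℝ) else 0)
          - p.lam S * p.Δ * (if Q < p.B then (1 : ℝ) else 0)
          - (∑ S' ∈ (Finset.Icc 1 p.N).erase S, p.sig S S') * p.Δ) * V S Q a)

/-- Finite-horizon value iteration: `V_0 ≡ 0`,
`V_{t+1}(S,Q,W) = min_{a ∈ {0,…,M}} (s(W,a) + w_t(S,Q,a))`. -/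
noncomputable def Vit (p : MDPParams) : ℕ → ℕ → ℕ → ℕ → ℝ
  | 0 => fun _ _ _ => 0
  | t + 1 => fun S Q W =>
      (Finset.Iic p.M).inf' Finset.nonempty_Iic
        (fun a => sCost p W a + wStep p (Vit p t) S Q a)

/-- `u_t(S,Q,W,a) = s(W,a) + w_t(S,Q,a)`. -/
noncomputable def uIt (p : MDPParams) (t : ℕ) (S Q W a : ℕ) : ℝ :=
  sCost p W a + wStep p (Vit p t) S Q a

section Aux

lemma wStep_mono_adj (p : MDPParams) (V : ℕ → ℕ → ℕ → ℝ)
    (hV : ∀ S ∈ Finset.Icc 1 p.N, ∀ W ≤ p.M, ∀ Q1 Q2, Q1 ≤ Q2 → Q2 ≤ p.B →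
      V S Q1 W ≤ V S Q2 W)
    (hlam : ∀ S ∈ Finset.Icc 1 p.N, 0 ≤ p.lam S)
    (hsig : ∀ S S', S ≠ S' → 0 ≤ p.sig S S')
    (hmu : 0 ≤ p.mu) (hΔ : 0 < p.Δ) (hr0 : 0 ≤ p.r) (hω : 0 ≤ p.ω)
    (hsmall : ∀ S ∈ Finset.Icc 1 p.N,
      (p.M : ℝ) * p.mu * p.Δ + p.lam S * p.Δ
        + (∑ S' ∈ (Finset.Icc 1 p.N).erase S, p.sig S S') * p.Δ ≤ 1)
    (S : ℕ) (hS : S ∈ Finset.Icc 1 p.N) (a : ℕ) (ha : a ≤ p.M)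
    (Q : ℕ) (hQ : Q + 1 ≤ p.B) :
    wStep p V S Q a ≤ wStep p V S (Q + 1) a := by
  have hA : 0 ≤ p.lam S * p.Δ := mul_nonneg (hlam S hS) hΔ.le
  have hD : 0 ≤ (a : ℝ) * p.mu * p.Δ :=
    mul_nonneg (mul_nonneg (Nat.cast_nonneg a) hmu) hΔ.le
  have hGpt : ∀ S' ∈ (Finset.Icc 1 p.N).erase S, 0 ≤ p.sig S S' * p.Δ := by
    intro S' hS'
    exact mul_nonneg (hsig S S' (Ne.symm (Finset.ne_of_mem_erase hS'))) hΔ.le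
  have hG : 0 ≤ (∑ S' ∈ (Finset.Icc 1 p.N).erase S, p.sig S S') * p.Δ := by
    rw [Finset.sum_mul]
    exact Finset.sum_nonneg (fun S' hS' => hGpt S' hS')
  have hDle : (a : ℝ) * p.mu * p.Δ ≤ (p.M : ℝ) * p.mu * p.Δ := by
    have : (a : ℝ) ≤ (p.M : ℝ) := Nat.cast_le.mpr ha
    have := mul_le_mul_of_nonneg_right (mul_le_mul_of_nonneg_right this hmu) hΔ.le
    linarith
  have hstay : p.lam S * p.Δ + (a : ℝ) * p.mu * p.Δ
      + (∑ S' ∈ (Finset.Icc 1 p.N).erase S, p.sig S S') * p.Δ ≤ 1 := by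
    have := hsmall S hS; linarith
  -- monotonicity instances we need
  have hV1 : V S Q a ≤ V S (Q + 1) a := hV S hS a ha Q (Q + 1) (Nat.le_succ Q) hQ
  have hsum : (∑ S' ∈ (Finset.Icc 1 p.N).erase S, p.sig S S' * p.Δ * V S' Q a)
      ≤ ∑ S' ∈ (Finset.Icc 1 p.N).erase S, p.sig S S' * p.Δ * V S' (Q + 1) a := by
    apply Finset.sum_le_sum
    intro S' hS'
    exact mul_le_mul_of_nonneg_left
      (hV S' (Finset.mem_of_mem_erase hS') a ha Q (Q + 1) (Nat.le_succ Q) hQ)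
      (hGpt S' hS')
  have hQB : Q < p.B := hQ
  have hX : (∑ S' ∈ (Finset.Icc 1 p.N).erase S, p.sig S S' * p.Δ * V S' Q a)
      + p.lam S * p.Δ * (if Q < p.B then (1 : ℝ) else 0) * V S (Q + 1) a
      + (a : ℝ) * p.mu * p.Δ * (if 0 < Q then (1 : ℝ) else 0) * V S (Q - 1) a
      + (1 - (a : ℝ) * p.mu * p.Δ * (if 0 < Q then (1 : ℝ) else 0)
          - p.lam S * p.Δ * (if Q < p.B then (1 : ℝ) else 0)
          - (∑ S' ∈ (Finset.Icc 1 p.N).erase S, p.sig S S') * p.Δ) * V S Q a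
      ≤ (∑ S' ∈ (Finset.Icc 1 p.N).erase S, p.sig S S' * p.Δ * V S' (Q + 1) a)
      + p.lam S * p.Δ * (if Q + 1 < p.B then (1 : ℝ) else 0) * V S (Q + 1 + 1) a
      + (a : ℝ) * p.mu * p.Δ * (if 0 < Q + 1 then (1 : ℝ) else 0) * V S (Q + 1 - 1) a
      + (1 - (a : ℝ) * p.mu * p.Δ * (if 0 < Q + 1 then (1 : ℝ) else 0)
          - p.lam S * p.Δ * (if Q + 1 < p.B then (1 : ℝ) else 0)
          - (∑ S' ∈ (Finset.Icc 1 p.N).erase S, p.sig S S') * p.Δ) * V S (Q + 1) a := by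
    simp only [if_pos hQB, if_pos (Nat.succ_pos Q), Nat.add_sub_cancel]
    rcases Nat.eq_zero_or_pos Q with h0 | h0
    · subst h0
      simp only [Nat.lt_irrefl, if_neg (lt_irrefl 0), Nat.zero_sub]
      rcases lt_or_ge (0 + 1) p.B with hb | hb
      · simp only [if_pos hb]
        have hV2 : V S (0 + 1) a ≤ V S (0 + 1 + 1) a :=
          hV S hS a ha (0 + 1) (0 + 1 + 1) (Nat.le_succ _) hb
        have e1 := mul_le_mul_of_nonneg_left hV2 hA
        have e2 := mul_le_mul_of_nonneg_left hV1 (by linarith : (0:ℝ) ≤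
          1 - (a : ℝ) * p.mu * p.Δ - p.lam S * p.Δ
            - (∑ S' ∈ (Finset.Icc 1 p.N).erase S, p.sig S S') * p.Δ)
        have e3 := mul_le_mul_of_nonneg_left hV1 hD
        nlinarith [hsum]
      · have hbe : ¬ (0 + 1 < p.B) := not_lt.mpr hb
        simp only [if_neg hbe]
        have e2 := mul_le_mul_of_nonneg_left hV1 (by linarith : (0:ℝ) ≤
          1 - (a : ℝ) * p.mu * p.Δ - p.lam S * p.Δ
            - (∑ S' ∈ (Finset.Icc 1 p.N).erase S, p.sig S S') * p.Δ)
        have e3 := mul_le_mul_of_nonneg_left hV1 hA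
        nlinarith [hsum]
    · simp only [if_pos h0]
      have hVm : V S (Q - 1) a ≤ V S Q a :=
        hV S hS a ha (Q - 1) Q (Nat.sub_le Q 1) (le_of_lt hQB)
      have e3 := mul_le_mul_of_nonneg_left hVm hD
      have e2 := mul_le_mul_of_nonneg_left hV1 (by linarith : (0:ℝ) ≤
        1 - (a : ℝ) * p.mu * p.Δ - p.lam S * p.Δ
          - (∑ S' ∈ (Finset.Icc 1 p.N).erase S, p.sig S S') * p.Δ)
      rcases lt_or_ge (Q + 1) p.B with hb | hb
      · simp only [if_pos hb]
        have hV2 : V S (Q + 1) a ≤ V S (Q + 1 + 1) a :=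
          hV S hS a ha (Q + 1) (Q + 1 + 1) (Nat.le_succ _) hb
        have e1 := mul_le_mul_of_nonneg_left hV2 hA
        nlinarith [hsum]
      · have hbe : ¬ (Q + 1 < p.B) := not_lt.mpr hb
        simp only [if_neg hbe]
        have e1 := mul_le_mul_of_nonneg_left hV1 hA
        nlinarith [hsum]
  have hωQ : p.ω * (Q : ℝ) ≤ p.ω * ((Q : ℕ) + 1 : ℕ) := by
    apply mul_le_mul_of_nonneg_left _ hω
    exact_mod_cast Nat.le_succ Q
  unfold wStep
  have := mul_le_mul_of_nonneg_left hX hr0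
  push_cast
  push_cast at hωQ
  simp only [Nat.add_sub_cancel] at this ⊢
  linarith

end Aux

/-- **Monotonicity of the cost-to-go in the queue length:** for every horizon `t`, phase
`S` and server count `W`, the map `Q ↦ V_t(S,Q,W)` is nondecreasing on `{0,…,B}`. -/
theorem costToGo_monotone_in_queue (p : MDPParams)
    (hN : 1 ≤ p.N) (hM : 1 ≤ p.M) (hB : 1 ≤ p.B)
    (hlam : ∀ S ∈ Finset.Icc 1 p.N, 0 ≤ p.lam S)
    (hsig : ∀ S S', S ≠ S' → 0 ≤ p.sig S S')
    (hmu : 0 ≤ p.mu) (hΔ : 0 < p.Δ) (hr0 : 0 ≤ p.r) (hr1 : p.r < 1)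
    (hω : 0 ≤ p.ω) (hEon : 0 ≤ p.Eon) (hEsw : 0 ≤ p.Esw)
    (hsmall : ∀ S ∈ Finset.Icc 1 p.N,
      (p.M : ℝ) * p.mu * p.Δ + p.lam S * p.Δ
        + (∑ S' ∈ (Finset.Icc 1 p.N).erase S, p.sig S S') * p.Δ ≤ 1) :
    ∀ t : ℕ, ∀ S ∈ Finset.Icc 1 p.N, ∀ W ≤ p.M, ∀ Q1 Q2, Q1 ≤ Q2 → Q2 ≤ p.B →
      Vit p t S Q1 W ≤ Vit p t S Q2 W := by
  intro t
  induction t with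
  | zero => intro S _ W _ Q1 Q2 _ _; simp [Vit]
  | succ t ih =>
    intro S hS W hW Q1 Q2 hQ12 hQ2B
    have key : ∀ a ≤ p.M, wStep p (Vit p t) S Q1 a ≤ wStep p (Vit p t) S Q2 a := by
      intro a ha
      have adj : ∀ Q, Q + 1 ≤ p.B →
          wStep p (Vit p t) S Q a ≤ wStep p (Vit p t) S (Q + 1) a :=
        fun Q hQ => wStep_mono_adj p (Vit p t) ih hlam hsig hmu hΔ hr0 hω hsmall S hS a ha Q hQ
      have gen : ∀ n, Q1 + n ≤ p.B →
          wStep p (Vit p t) S Q1 a ≤ wStep p (Vit p t) S (Q1 + n) a := by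
        intro n
        induction n with
        | zero => intro _; simp
        | succ n ihn =>
          intro hn
          have h1 : Q1 + n ≤ p.B := by omega
          calc wStep p (Vit p t) S Q1 a ≤ wStep p (Vit p t) S (Q1 + n) a := ihn h1
            _ ≤ wStep p (Vit p t) S (Q1 + n + 1) a := adj _ (by omega)
            _ = wStep p (Vit p t) S (Q1 + (n + 1)) a := by ring_nf
      have := gen (Q2 - Q1) (by omega)
      rwa [Nat.add_sub_cancel' hQ12] at this
    show Vit p (t+1) S Q1 W ≤ Vit p (t+1) S Q2 W
    simp only [Vit]
    apply Finset.le_inf'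
    intro a ha
    refine le_trans (Finset.inf'_le _ ha) ?_
    exact add_le_add (le_refl _) (key a (Finset.mem_Iic.mp ha))
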